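/- For n ≥ 2, let ζ = exp(2πi/n) and for 0 ≤ k ≤ n define ψ_k = Σ_{S ⊆ [n], |S| = k} (Σ_{j∈S} ζ^j) e_S ∈ ℂ^{2^n}, where the coordinates of ℂ^{2^n} are indexed by subsets S of [n] = {1,…,n}. Then: (i) ψ_0 = ψ_n = 0 and ψ_k ≠ 0 for 1 ≤ k ≤ n−1; (ii) ⟨𝟙_{W_k}, ψ_k⟩ = 0 for all k, where 𝟙_{W_k} = Σ_{|S|=k} e_S; and (iii) A(Q_n) ψ_k = k ψ_{k+1} + (n−k) ψ_{k−1} for 1 ≤ k ≤ n−1, where A(Q_n) is the adjacency matrix of the n-cube. -/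

import Mathlib

noncomputable section

open Matrix Finset

/-- The adjacency matrix of the `n`-cube `Q_n`, whose vertices are the subsets of
`[n] = {1, …, n}` (modelled as `Finset (Fin n)`, the element `j : Fin n` playing the role
of `j + 1 ∈ [n]`), two subsets being adjacent exactly when their symmetric difference has
one element. -/
def adjCube (n : ℕ) : Matrix (Finset (Fin n)) (Finset (Fin n)) ℂ :=
  Matrix.of fun S T => if (symmDiff S T).card = 1 then 1 else 0

/-- `ζ = exp(2πi/n)`. -/
def zetaC (n : ℕ) : ℂ := Complex.exp (2 * Real.pi * Complex.I / n)

/-- The vector `ψ_k = ∑_{|S| = k} (∑_{j ∈ S} ζ^j) e_S ∈ ℂ^{2^n}`. -/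
def psiVec (n k : ℕ) : Finset (Fin n) → ℂ := fun S =>
  if S.card = k then ∑ j ∈ S, zetaC n ^ ((j : ℕ) + 1) else 0

lemma zetaC_prim (n : ℕ) (hn : 2 ≤ n) : IsPrimitiveRoot (zetaC n) n :=
  Complex.isPrimitiveRoot_exp n (by omega)

lemma zetaC_sum_all (n : ℕ) (hn : 2 ≤ n) :
    ∑ j : Fin n, zetaC n ^ ((j : ℕ) + 1) = 0 := by
  rw [Fin.sum_univ_eq_sum_range (fun j => zetaC n ^ (j + 1))]
  simp_rw [pow_succ, ← Finset.sum_mul]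
  rw [(zetaC_prim n hn).geom_sum_eq_zero (by omega), zero_mul]

lemma symmDiff_singleton_mem {n : ℕ} {T : Finset (Fin n)} {i : Fin n} (h : i ∈ T) :
    symmDiff T {i} = T.erase i := by
  ext x
  simp only [Finset.mem_symmDiff, Finset.mem_singleton, Finset.mem_erase]
  constructor
  · rintro (⟨hx, hne⟩ | ⟨rfl, hx⟩)
    · exact ⟨hne, hx⟩
    · exact absurd h hx
  · rintro ⟨hne, hx⟩; exact Or.inl ⟨hx, hne⟩

lemma symmDiff_singleton_not_mem {n : ℕ} {T : Finset (Fin n)} {i : Fin n} (h : i ∉ T) :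
    symmDiff T {i} = insert i T := by
  ext x
  simp only [Finset.mem_symmDiff, Finset.mem_singleton, Finset.mem_insert]
  constructor
  · rintro (⟨hx, hne⟩ | ⟨rfl, hx⟩)
    · exact Or.inr hx
    · exact Or.inl rfl
  · rintro (rfl | hx)
    · exact Or.inr ⟨rfl, h⟩
    · exact Or.inl ⟨hx, fun he => h (he ▸ hx)⟩

lemma mulVec_adjCube {n : ℕ} (v : Finset (Fin n) → ℂ) (T : Finset (Fin n)) :
    (adjCube n *ᵥ v) T = ∑ i : Fin n, v (symmDiff T {i}) := by
  have : (adjCube n *ᵥ v) T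
      = ∑ S ∈ Finset.univ.filter (fun S => (symmDiff T S).card = 1), v S := by
    rw [Finset.sum_filter, mulVec]
    simp [adjCube, dotProduct, ite_mul]
  rw [this]
  refine (Finset.sum_bij (fun i _ => symmDiff T {i}) ?_ ?_ ?_ ?_).symm
  · intro i _
    simp [symmDiff_symmDiff_cancel_left]
  · intro i _ i' _ h
    apply Finset.singleton_injective
    calc ({i} : Finset (Fin n)) = symmDiff T (symmDiff T {i}) :=
          (symmDiff_symmDiff_cancel_left (a := T) (b := {i})).symm
      _ = symmDiff T (symmDiff T {i'}) := by rw [h]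
      _ = {i'} := symmDiff_symmDiff_cancel_left (a := T) (b := {i'})
  · intro S hS
    simp only [Finset.mem_filter, Finset.mem_univ, true_and] at hS
    obtain ⟨i, hi⟩ := Finset.card_eq_one.mp hS
    refine ⟨i, Finset.mem_univ i, ?_⟩
    show symmDiff T {i} = S
    rw [← hi, symmDiff_symmDiff_cancel_left]
  · intro i _; rfl

/-- For `n ≥ 2` the vectors `ψ_k` satisfy: (i) `ψ_0 = ψ_n = 0` and `ψ_k ≠ 0` for
`1 ≤ k ≤ n-1`; (ii) `⟨𝟙_{W_k}, ψ_k⟩ = 0` for all `k`; and (iii)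
`A(Q_n) ψ_k = k ψ_{k+1} + (n-k) ψ_{k-1}` for `1 ≤ k ≤ n-1`. -/
theorem cube_dark_module (n : ℕ) (hn : 2 ≤ n) :
    (psiVec n 0 = 0 ∧ psiVec n n = 0 ∧
      ∀ k : ℕ, 1 ≤ k → k ≤ n - 1 → psiVec n k ≠ 0) ∧
    (∀ k : ℕ, ∑ S ∈ Finset.univ.filter (fun S : Finset (Fin n) => S.card = k),
      psiVec n k S = 0) ∧
    (∀ k : ℕ, 1 ≤ k → k ≤ n - 1 →
      adjCube n *ᵥ psiVec n k
        = (k : ℂ) • psiVec n (k + 1) + ((n : ℂ) - (k : ℂ)) • psiVec n (k - 1)) := by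
  have hprim := zetaC_prim n hn
  have hall := zetaC_sum_all n hn
  refine ⟨⟨?_, ?_, ?_⟩, ?_, ?_⟩
  · -- ψ_0 = 0
    funext S
    simp only [psiVec, Pi.zero_apply]
    split
    · next h => rw [Finset.card_eq_zero.mp h]; simp
    · rfl
  · -- ψ_n = 0
    funext S
    simp only [psiVec, Pi.zero_apply]
    split
    · next h =>
      have : S = Finset.univ := by
        have := S.card_eq_iff_eq_univ
        rw [Fintype.card_fin] at this
        exact this.mp h
      rw [this]; exact hall
    · rfl
  · -- ψ_k ≠ 0
    intro k hk1 hk2 hzero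
    have hkn : k ≤ n := by omega
    set S : Finset (Fin n) := (Finset.range k).attachFin
      (fun m hm => lt_of_lt_of_le (Finset.mem_range.mp hm) hkn) with hSdef
    have hcard : S.card = k := by rw [hSdef, Finset.card_attachFin, Finset.card_range]
    have hval : psiVec n k S = 0 := by rw [hzero]; rfl
    rw [psiVec, if_pos hcard] at hval
    have hsum : ∑ j ∈ S, zetaC n ^ ((j : ℕ) + 1) = ∑ m ∈ Finset.range k, zetaC n ^ (m + 1) := by
      refine Finset.sum_nbij' (fun j => (j : ℕ))
        (fun m => ⟨m % n, Nat.mod_lt m (by omega)⟩) ?_ ?_ ?_ ?_ ?_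
      · intro j hj
        rw [hSdef, Finset.mem_attachFin] at hj
        exact hj
      · intro m hm
        rw [hSdef, Finset.mem_attachFin]
        rw [Finset.mem_range] at hm ⊢
        simpa [Nat.mod_eq_of_lt (lt_of_lt_of_le hm hkn)] using hm
      · intro j hj
        rw [hSdef, Finset.mem_attachFin, Finset.mem_range] at hj
        exact Fin.ext (by simp [Nat.mod_eq_of_lt (lt_of_lt_of_le hj hkn)])
      · intro m hm
        rw [Finset.mem_range] at hm
        simp [Nat.mod_eq_of_lt (lt_of_lt_of_le hm hkn)]
      · intro j _; rfl
    rw [hsum] at hval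
    have h2 : ∑ m ∈ Finset.range k, zetaC n ^ (m + 1)
        = (∑ m ∈ Finset.range k, zetaC n ^ m) * zetaC n := by
      simp_rw [pow_succ, ← Finset.sum_mul]
    rw [h2] at hval
    have hz1 : zetaC n ≠ 1 := hprim.ne_one (by omega)
    have hzne : zetaC n ≠ 0 := by
      intro h
      have := hprim.pow_eq_one
      rw [h, zero_pow (by omega : n ≠ 0)] at this
      exact zero_ne_one this
    rw [geom_sum_eq hz1] at hval
    have hpk : zetaC n ^ k ≠ 1 := hprim.pow_ne_one_of_pos_of_lt (by omega) (by omega)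
    have := mul_eq_zero.mp hval
    rcases this with h | h
    · exact (div_eq_zero_iff.mp h).elim (fun h => hpk (sub_eq_zero.mp h))
        (fun h => hz1 (sub_eq_zero.mp h))
    · exact hzne h
  · -- orthogonality
    intro k
    rcases Nat.eq_zero_or_pos k with rfl | hk
    · refine Finset.sum_eq_zero fun S hS => ?_
      rw [Finset.mem_filter] at hS
      rw [psiVec, if_pos hS.2, Finset.card_eq_zero.mp hS.2]
      simp
    · have key : ∀ j : Fin n,
          (Finset.univ.filter (fun S : Finset (Fin n) => S.card = k ∧ j ∈ S)).card
            = (n - 1).choose (k - 1) := by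
        intro j
        have h1 : ((Finset.univ.erase j).powersetCard (k-1)).card = (n-1).choose (k-1) := by
          rw [Finset.card_powersetCard, Finset.card_erase_of_mem (Finset.mem_univ j),
            Finset.card_univ, Fintype.card_fin]
        rw [← h1]
        refine Finset.card_nbij' (fun S => S.erase j) (fun t => insert j t) ?_ ?_ ?_ ?_
        · intro S hS
          rw [Finset.mem_coe, Finset.mem_filter] at hS
          rw [Finset.mem_coe, Finset.mem_powersetCard]
          exact ⟨Finset.erase_subset_erase j (Finset.subset_univ S),
            by rw [Finset.card_erase_of_mem hS.2.2, hS.2.1]⟩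
        · intro t ht
          rw [Finset.mem_coe, Finset.mem_powersetCard] at ht
          have hjt : j ∉ t := fun h => (Finset.mem_erase.mp (ht.1 h)).1 rfl
          rw [Finset.mem_coe, Finset.mem_filter]
          refine ⟨Finset.mem_univ _, ?_, Finset.mem_insert_self j t⟩
          rw [Finset.card_insert_of_notMem hjt, ht.2]
          omega
        · intro S hS
          rw [Finset.mem_coe, Finset.mem_filter] at hS
          exact Finset.insert_erase hS.2.2
        · intro t ht
          rw [Finset.mem_coe, Finset.mem_powersetCard] at ht
          exact Finset.erase_insert (fun h => (Finset.mem_erase.mp (ht.1 h)).1 rfl)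
      calc ∑ S ∈ Finset.univ.filter (fun S : Finset (Fin n) => S.card = k), psiVec n k S
          = ∑ S ∈ Finset.univ.filter (fun S : Finset (Fin n) => S.card = k),
              ∑ j ∈ S, zetaC n ^ ((j : ℕ) + 1) := by
            refine Finset.sum_congr rfl fun S hS => ?_
            rw [Finset.mem_filter] at hS
            rw [psiVec, if_pos hS.2]
        _ = ∑ S ∈ Finset.univ.filter (fun S : Finset (Fin n) => S.card = k),
              ∑ j : Fin n, if j ∈ S then zetaC n ^ ((j : ℕ) + 1) else 0 := by
            refine Finset.sum_congr rfl fun S _ => ?_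
            rw [Finset.sum_ite_mem, Finset.univ_inter]
        _ = ∑ j : Fin n, ∑ S ∈ Finset.univ.filter (fun S : Finset (Fin n) => S.card = k),
              (if j ∈ S then zetaC n ^ ((j : ℕ) + 1) else 0) := Finset.sum_comm
        _ = ∑ j : Fin n, ((n-1).choose (k-1) : ℂ) * zetaC n ^ ((j : ℕ) + 1) := by
            refine Finset.sum_congr rfl fun j _ => ?_
            rw [Finset.sum_ite, Finset.sum_const_zero, add_zero, Finset.sum_const,
              Finset.filter_filter, key j, nsmul_eq_mul]
        _ = ((n-1).choose (k-1) : ℂ) * ∑ j : Fin n, zetaC n ^ ((j : ℕ) + 1) := by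
            rw [Finset.mul_sum]
        _ = 0 := by rw [hall, mul_zero]
  · -- adjacency relation
    intro k hk1 hk2
    funext T
    rw [mulVec_adjCube]
    have hsplit : ∑ i : Fin n, psiVec n k (symmDiff T {i})
        = ∑ i ∈ T, psiVec n k (T.erase i) + ∑ i ∈ Tᶜ, psiVec n k (insert i T) := by
      rw [← Finset.sum_add_sum_compl T]
      congr 1
      · exact Finset.sum_congr rfl fun i hi => by rw [symmDiff_singleton_mem hi]
      · exact Finset.sum_congr rfl fun i hi => by
          rw [symmDiff_singleton_not_mem (Finset.mem_compl.mp hi)]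
    rw [hsplit]
    simp only [Pi.add_apply, Pi.smul_apply, smul_eq_mul]
    rcases eq_or_ne T.card (k+1) with hT | hT
    · -- |T| = k + 1
      have h1 : ∑ i ∈ T, psiVec n k (T.erase i)
          = ∑ i ∈ T, ((∑ j ∈ T, zetaC n ^ ((j : ℕ) + 1)) - zetaC n ^ ((i : ℕ) + 1)) := by
        refine Finset.sum_congr rfl fun i hi => ?_
        rw [psiVec, if_pos (by rw [Finset.card_erase_of_mem hi, hT]; omega),
          Finset.sum_erase_eq_sub hi]
      have h2 : ∑ i ∈ Tᶜ, psiVec n k (insert i T) = 0 := by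
        refine Finset.sum_eq_zero fun i hi => ?_
        rw [psiVec, if_neg]
        rw [Finset.card_insert_of_notMem (Finset.mem_compl.mp hi), hT]
        omega
      rw [h1, h2, Finset.sum_sub_distrib, Finset.sum_const, hT, add_zero]
      rw [psiVec, if_pos hT, psiVec, if_neg (by omega)]
      ring
    · rcases eq_or_ne T.card (k-1) with hT' | hT'
      · -- |T| = k - 1
        have h1 : ∑ i ∈ T, psiVec n k (T.erase i) = 0 := by
          refine Finset.sum_eq_zero fun i hi => ?_
          rw [psiVec, if_neg]
          rw [Finset.card_erase_of_mem hi, hT']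
          omega
        have h2 : ∑ i ∈ Tᶜ, psiVec n k (insert i T)
            = ∑ i ∈ Tᶜ, ((∑ j ∈ T, zetaC n ^ ((j : ℕ) + 1)) + zetaC n ^ ((i : ℕ) + 1)) := by
          refine Finset.sum_congr rfl fun i hi => ?_
          rw [psiVec, if_pos (by
            rw [Finset.card_insert_of_notMem (Finset.mem_compl.mp hi), hT']; omega),
            Finset.sum_insert (Finset.mem_compl.mp hi), add_comm]
        have hcompl : ∑ i ∈ Tᶜ, zetaC n ^ ((i : ℕ) + 1)
            = - ∑ j ∈ T, zetaC n ^ ((j : ℕ) + 1) := by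
          have := Finset.sum_add_sum_compl T (fun i : Fin n => zetaC n ^ ((i : ℕ) + 1))
          rw [hall] at this
          linear_combination this
        rw [h1, h2, Finset.sum_add_distrib, Finset.sum_const, hcompl, zero_add,
          Finset.card_compl, Fintype.card_fin, hT']
        rw [psiVec, if_neg (by omega), psiVec, if_pos hT']
        have hcast : ((n - (k-1) : ℕ) : ℂ) = (n : ℂ) - (k : ℂ) + 1 := by
          have : n - (k-1) = n - k + 1 := by omega
          rw [this]
          push_cast [Nat.cast_sub (by omega : k ≤ n)]
          ring
        rw [nsmul_eq_mul, hcast]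
        ring
      · -- |T| ∉ {k-1, k+1}
        have h1 : ∑ i ∈ T, psiVec n k (T.erase i) = 0 := by
          refine Finset.sum_eq_zero fun i hi => ?_
          rw [psiVec, if_neg]
          rw [Finset.card_erase_of_mem hi]
          have : 1 ≤ T.card := Finset.card_pos.mpr ⟨i, hi⟩
          omega
        have h2 : ∑ i ∈ Tᶜ, psiVec n k (insert i T) = 0 := by
          refine Finset.sum_eq_zero fun i hi => ?_
          rw [psiVec, if_neg]
          rw [Finset.card_insert_of_notMem (Finset.mem_compl.mp hi)]
          omega
        rw [h1, h2, psiVec, if_neg hT, psiVec, if_neg hT']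
        ring
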